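/- Let S_n = Y_1 + ... + Y_n where Y_i = B_i X_i are independent random variables, each X_i has distribution Q_i on ℕ = {1,2,...} with mean q_i and full support on ℕ, and each B_i ~ Bernoulli(p_i) with p_i ∈ (0,1) is independent of X_i, so that each Y_i ~ P_i is supported on the whole of ℤ≥0. Let λ = Σ_{i=1}^n p_i and Q = Σ_{i=1}^n (p_i/λ) Q_i. Then for every s ∈ ℤ≥0 the Katti-Panjer score satisfies the projection identity r_2(s; P_{S_n}, Q) = E[ Σ_{i=1}^n r_2(Y_i; P_i, Q_i) | S_n = s ], where P_{S_n} is the distribution of S_n and the score of S_n is taken with parameter λ while the score of Y_i is taken with parameter p_i. -/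

import Mathlib

open scoped BigOperators Classical ENNReal

noncomputable section

/-- Point mass at `0`. -/
def delta0 : ℕ → ℝ := fun x => if x = 0 then 1 else 0

/-- Convolution of two distributions on `ℕ`. -/
def dconv (P R : ℕ → ℝ) : ℕ → ℝ := fun x => ∑ j ∈ Finset.range (x + 1), P j * R (x - j)

/-- `k`-fold convolution power of `Q` (with `Q^{*0} = δ₀`). -/
def dconvPow (Q : ℕ → ℝ) : ℕ → ℕ → ℝ
  | 0 => delta0
  | k + 1 => dconv (dconvPow Q k) Q

/-- Compound distribution `C_Q R`: the law of `X_1 + ... + X_Y` where `Y ~ R` and the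
`X_i` are i.i.d. with law `Q`, independent of `Y`. -/
def dcompound (Q R : ℕ → ℝ) : ℕ → ℝ := fun x => ∑' k, R k * dconvPow Q k x

/-- Poisson(λ) pmf. -/
def poissonPmf (l : ℝ) : ℕ → ℝ := fun k => Real.exp (-l) * l ^ k / (Nat.factorial k : ℝ)

/-- Compound Poisson distribution `CPo(λ, Q)`. -/
def cpo (l : ℝ) (Q : ℕ → ℝ) : ℕ → ℝ := dcompound Q (poissonPmf l)

/-- Bernoulli(p) pmf on `ℕ`. -/
def bern (p : ℝ) : ℕ → ℝ := fun k => if k = 0 then 1 - p else if k = 1 then p else 0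

/-- Compound Bernoulli distribution `C_Q Bern(p)`, i.e. the law of `B·X` with
`B ~ Bern(p)` independent of `X ~ Q` (where `Q` is supported on `{1,2,...}`). -/
def cbern (p : ℝ) (Q : ℕ → ℝ) : ℕ → ℝ := fun x => if x = 0 then 1 - p else p * Q x

/-- Distribution of the sum of `n` independent random variables with laws `P i`. -/
def sumDist : (n : ℕ) → (Fin n → ℕ → ℝ) → ℕ → ℝ
  | 0, _ => delta0
  | n + 1, P => dconv (sumDist n fun i => P i.castSucc) (P (Fin.last n))

/-- `P` is a probability distribution on `ℤ≥0 = {0,1,2,...}`. -/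
def IsDist (P : ℕ → ℝ) : Prop := (∀ x, 0 ≤ P x) ∧ (∑' x : ℕ, P x) = 1

/-- `Q` is a probability distribution on `ℕ = {1,2,...}`. -/
def IsDistN (Q : ℕ → ℝ) : Prop := IsDist Q ∧ Q 0 = 0

/-- Relative entropy `D(P‖R)`. -/
def relEnt (P R : ℕ → ℝ) : ℝ := ∑' x, P x * Real.log (P x / R x)

/-- Total variation distance. -/
def dTV (P R : ℕ → ℝ) : ℝ := (1 / 2) * ∑' x, |P x - R x|

/-- Mean of a distribution on `ℕ`. -/
def pmean (P : ℕ → ℝ) : ℝ := ∑' x : ℕ, (x : ℝ) * P x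

/-- Size-biased distribution `R^#`. -/
def sizeBias (R : ℕ → ℝ) : ℕ → ℝ := fun y => ((y : ℝ) + 1) * R (y + 1) / pmean R

/-- The Stein factor `H(λ, Q)`. -/
def steinFactor (l : ℝ) (Q : ℕ → ℝ) : ℝ :=
  if ∀ j : ℕ, 1 ≤ j → ((j : ℝ) + 1) * Q (j + 1) ≤ (j : ℝ) * Q j then
    if 1 ≤ (l * (Q 1 - 2 * Q 2))⁻¹ then 1
    else Real.sqrt (l * (Q 1 - 2 * Q 2))⁻¹ * (2 - Real.sqrt (l * (Q 1 - 2 * Q 2))⁻¹)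
  else Real.exp l * min 1 (l * Q 1)⁻¹

/-- Distribution of the leave-one-out sum `∑_{j ≠ i} Y_j`. -/
def looDist (n : ℕ) (P : Fin n → ℕ → ℝ) (i : Fin n) : ℕ → ℝ :=
  sumDist n (Function.update P i delta0)

/-- Size-biased score `r₁(s; P, 𝐐)` of a sum, where `Pmod i = P^{(i)}` is the law of the
sum with the `i`-th summand replaced by an independent `Y_i' ~ C_{Q_i}(R_i^#)`. -/
def score1 (n : ℕ) (p : Fin n → ℝ) (P : ℕ → ℝ) (Pmod : Fin n → ℕ → ℝ) (s : ℕ) : ℝ :=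
  (∑ i : Fin n, p i * Pmod i s) / ((∑ i : Fin n, p i) * P s) - 1

/-- Size-biased information `J_{𝐐,1}(S) = λ E[r₁(S; P, 𝐐)²]`. -/
def J1 (n : ℕ) (p : Fin n → ℝ) (P : ℕ → ℝ) (Pmod : Fin n → ℕ → ℝ) : ℝ :=
  (∑ i : Fin n, p i) * ∑' s, P s * (score1 n p P Pmod s) ^ 2

/-- Size-biased score of a single summand `Y ~ P = C_Q R`, where `Pmod = C_Q (R^#)`. -/
def score1s (P Pmod : ℕ → ℝ) (x : ℕ) : ℝ := Pmod x / P x - 1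

/-- Size-biased information of a single summand: `J_{Q,1}(Y) = p E[r₁(Y; P, Q)²]`. -/
def J1s (p : ℝ) (P Pmod : ℕ → ℝ) : ℝ := p * ∑' x, P x * (score1s P Pmod x) ^ 2

/-- Katti-Panjer score `r₂(y; P, Q)` with parameter `λ`. -/
def score2 (l : ℝ) (Q P : ℕ → ℝ) (y : ℕ) : ℝ :=
  l * (∑ j ∈ Finset.range (y + 1), (j : ℝ) * Q j * P (y - j)) / P y - (y : ℝ)

/-- Katti-Panjer information `J_{Q,2}(Y) = E[r₂(Y; P, Q)²]`. -/
def J2 (l : ℝ) (Q P : ℕ → ℝ) : ℝ := ∑' y, P y * (score2 l Q P y) ^ 2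

/-- Dissimilarity measure `D(𝐐) = ∑_{j≥1} ∑_i (j pᵢ / q) |Qᵢ(j) − Q(j)|`. -/
def dissim (n : ℕ) (p : Fin n → ℝ) (Qs : Fin n → ℕ → ℝ) (Q : ℕ → ℝ) (q : ℝ) : ℝ :=
  ∑' j : ℕ, ∑ i : Fin n, (j : ℝ) * p i / q * |Qs i j - Q j|


lemma mk_dconv (A B : ℕ → ℝ) :
    PowerSeries.mk (dconv A B) = PowerSeries.mk A * PowerSeries.mk B := by
  ext n
  rw [PowerSeries.coeff_mk, PowerSeries.coeff_mul,
    Finset.Nat.sum_antidiagonal_eq_sum_range_succ_mk]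
  simp [dconv]

lemma dconv_apply (A B : ℕ → ℝ) (x : ℕ) :
    dconv A B x = PowerSeries.coeff x (PowerSeries.mk A * PowerSeries.mk B) := by
  rw [← mk_dconv, PowerSeries.coeff_mk]

lemma dconv_comm (A B : ℕ → ℝ) : dconv A B = dconv B A := by
  funext x; rw [dconv_apply, dconv_apply, mul_comm]

lemma dconv_assoc (A B C : ℕ → ℝ) : dconv (dconv A B) C = dconv A (dconv B C) := by
  funext x; rw [dconv_apply, dconv_apply, mk_dconv, mk_dconv, mul_assoc]

lemma mk_delta0 : PowerSeries.mk delta0 = 1 := by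
  ext n; rw [PowerSeries.coeff_mk, PowerSeries.coeff_one]; simp [delta0]

lemma dconv_delta0 (B : ℕ → ℝ) : dconv delta0 B = B := by
  funext x; rw [dconv_apply, mk_delta0, one_mul, PowerSeries.coeff_mk]

lemma dconv_delta0' (B : ℕ → ℝ) : dconv B delta0 = B := by
  rw [dconv_comm, dconv_delta0]

lemma dconv_weight (A B : ℕ → ℝ) (s : ℕ) :
    dconv (fun x => (x:ℝ) * A x) B s + dconv (fun x => (x:ℝ) * B x) A s
      = (s:ℝ) * dconv A B s := by
  unfold dconv
  have h : ∑ j ∈ Finset.range (s+1), ((j:ℝ) * B j) * A (s - j)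
      = ∑ j ∈ Finset.range (s+1), (((s - j : ℕ):ℝ) * A j) * B (s - j) := by
    rw [← Finset.sum_range_reflect]
    apply Finset.sum_congr rfl
    intro j hj
    rw [Finset.mem_range, Nat.lt_succ_iff] at hj
    have h1 : s + 1 - 1 - j = s - j := by omega
    have h2 : s - (s - j) = j := by omega
    rw [h1, h2]; ring
  rw [h, ← Finset.sum_add_distrib, Finset.mul_sum]
  apply Finset.sum_congr rfl
  intro j hj
  rw [Finset.mem_range, Nat.lt_succ_iff] at hj
  have : ((s - j : ℕ):ℝ) = (s:ℝ) - (j:ℝ) := by rw [Nat.cast_sub hj]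
  rw [this]; ring

lemma dconv_sum {ι : Type*} (t : Finset ι) (f : ι → ℕ → ℝ) (B : ℕ → ℝ) (s : ℕ) :
    dconv (fun x => ∑ i ∈ t, f i x) B s = ∑ i ∈ t, dconv (f i) B s := by
  unfold dconv
  rw [Finset.sum_comm]
  apply Finset.sum_congr rfl
  intro j _; rw [Finset.sum_mul]

lemma looDist_last (n : ℕ) (P : Fin (n+1) → ℕ → ℝ) :
    looDist (n+1) P (Fin.last n) = sumDist n (fun k => P k.castSucc) := by
  unfold looDist
  show dconv (sumDist n fun k => Function.update P (Fin.last n) delta0 k.castSucc)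
      (Function.update P (Fin.last n) delta0 (Fin.last n)) = _
  rw [Function.update_self, dconv_delta0']
  have h : (fun k : Fin n => Function.update P (Fin.last n) delta0 k.castSucc)
      = fun k : Fin n => P k.castSucc := by
    funext k
    exact Function.update_of_ne (Fin.castSucc_lt_last k).ne _ _
  rw [h]

lemma looDist_castSucc (n : ℕ) (P : Fin (n+1) → ℕ → ℝ) (j : Fin n) :
    looDist (n+1) P j.castSucc
      = dconv (looDist n (fun k => P k.castSucc) j) (P (Fin.last n)) := by
  unfold looDist
  show dconv (sumDist n fun k => Function.update P j.castSucc delta0 k.castSucc)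
      (Function.update P j.castSucc delta0 (Fin.last n)) = _
  rw [Function.update_of_ne (Fin.castSucc_lt_last j).ne']
  have h : (fun k : Fin n => Function.update P j.castSucc delta0 k.castSucc)
      = Function.update (fun k : Fin n => P k.castSucc) j delta0 := by
    funext k
    by_cases hk : k = j
    · subst hk; simp
    · rw [Function.update_of_ne (fun h => hk (Fin.castSucc_injective n h)),
        Function.update_of_ne hk]
  rw [h]

lemma sumDist_eq_dconv_loo : ∀ (n : ℕ) (P : Fin n → ℕ → ℝ) (i : Fin n),
    sumDist n P = dconv (P i) (looDist n P i) := by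
  intro n
  induction n with
  | zero => exact fun P i => absurd i.2 (by omega)
  | succ n ih =>
    intro P i
    induction i using Fin.lastCases with
    | last =>
      rw [looDist_last, dconv_comm]
      rfl
    | cast j =>
      show dconv (sumDist n fun k => P k.castSucc) (P (Fin.last n)) = _
      rw [looDist_castSucc, ih (fun k => P k.castSucc) j, dconv_assoc]

lemma moment_decomp : ∀ (n : ℕ) (P : Fin n → ℕ → ℝ) (s : ℕ),
    ∑ i : Fin n, dconv (fun x => (x:ℝ) * P i x) (looDist n P i) s
      = (s:ℝ) * sumDist n P s := by
  intro n
  induction n with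
  | zero =>
    intro P s
    show (0:ℝ) = (s:ℝ) * delta0 s
    unfold delta0
    rcases s with _ | s <;> simp
  | succ n ih =>
    intro P s
    rw [Fin.sum_univ_castSucc]
    have hcast : ∀ j : Fin n,
        dconv (fun x => (x:ℝ) * P j.castSucc x) (looDist (n+1) P j.castSucc) s
          = dconv (dconv (fun x => (x:ℝ) * P j.castSucc x)
              (looDist n (fun k => P k.castSucc) j)) (P (Fin.last n)) s := by
      intro j
      rw [looDist_castSucc, dconv_assoc]
    rw [Finset.sum_congr rfl fun j _ => hcast j, ← dconv_sum]
    have hin : (fun x => ∑ j : Fin n, dconv (fun y => (y:ℝ) * P j.castSucc y)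
          (looDist n (fun k => P k.castSucc) j) x)
        = fun x : ℕ => (x:ℝ) * sumDist n (fun k => P k.castSucc) x := by
      funext x
      exact ih (fun k => P k.castSucc) x
    rw [hin, looDist_last]
    have := dconv_weight (sumDist n fun k => P k.castSucc) (P (Fin.last n)) s
    rw [this]
    rfl

lemma cbern_pos {p : ℝ} {Q : ℕ → ℝ} (hp : 0 < p) (hp1 : p < 1)
    (hQ : ∀ y, 1 ≤ y → 0 < Q y) : ∀ x, 0 < cbern p Q x := by
  intro x
  unfold cbern
  split_ifs with h
  · linarith
  · exact mul_pos hp (hQ x (by omega))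

lemma dconv_nonneg {A B : ℕ → ℝ} (hA : ∀ x, 0 ≤ A x) (hB : ∀ x, 0 ≤ B x) :
    ∀ s, 0 ≤ dconv A B s := by
  intro s
  exact Finset.sum_nonneg fun j _ => mul_nonneg (hA j) (hB _)

lemma sumDist_nonneg : ∀ (n : ℕ) (P : Fin n → ℕ → ℝ),
    (∀ i x, 0 ≤ P i x) → ∀ s, 0 ≤ sumDist n P s := by
  intro n
  induction n with
  | zero =>
    intro P hP s
    show (0:ℝ) ≤ delta0 s
    unfold delta0; positivity
  | succ n ih =>
    intro P hP s
    exact dconv_nonneg (ih _ fun i x => hP _ x) (fun x => hP _ x) s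

lemma sumDist_zero : ∀ (n : ℕ) (P : Fin n → ℕ → ℝ), sumDist n P 0 = ∏ i, P i 0 := by
  intro n
  induction n with
  | zero => intro P; simp [sumDist, delta0]
  | succ n ih =>
    intro P
    show dconv _ _ 0 = _
    unfold dconv
    rw [Fin.prod_univ_castSucc, ← ih (fun i => P i.castSucc)]
    simp

lemma looDist_nonneg {n : ℕ} {P : Fin n → ℕ → ℝ} (hP : ∀ i x, 0 ≤ P i x) (i : Fin n) :
    ∀ s, 0 ≤ looDist n P i s := by
  apply sumDist_nonneg
  intro j x
  by_cases hj : j = i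
  · subst hj; simp only [Function.update_self]; unfold delta0; positivity
  · rw [Function.update_of_ne hj]; exact hP j x

lemma looDist_zero_pos {n : ℕ} {P : Fin n → ℕ → ℝ} (hP : ∀ i x, 0 < P i x) (i : Fin n) :
    0 < looDist n P i 0 := by
  unfold looDist
  rw [sumDist_zero]
  apply Finset.prod_pos
  intro j _
  by_cases hj : j = i
  · subst hj; simp [delta0]
  · rw [Function.update_of_ne hj]; exact hP j 0

/-- **Proposition 4.3 (projection identity).** For a sum of independent compound
Bernoulli random variables `Y_i = B_i X_i` with full-support `Q_i`, the Katti-Panjer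
score of the sum (with parameter `λ` and mixture `Q`) is the conditional expectation,
given `S_n = s`, of the sum of the Katti-Panjer scores of the summands (with
parameters `p_i`). -/
theorem score2_projection_identity
    (n : ℕ) (hn : 0 < n) (p : Fin n → ℝ) (hp : ∀ i, 0 < p i ∧ p i < 1)
    (Qs : Fin n → ℕ → ℝ) (hQs : ∀ i, IsDistN (Qs i))
    (hfull : ∀ i, ∀ y : ℕ, 1 ≤ y → 0 < Qs i y)
    (q : Fin n → ℝ) (hQm : ∀ i, Summable fun x : ℕ => (x : ℝ) * Qs i x)
    (hq : ∀ i, pmean (Qs i) = q i)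
    (lam : ℝ) (hlam : lam = ∑ i : Fin n, p i)
    (Q : ℕ → ℝ) (hQ : Q = fun j => ∑ i : Fin n, p i / lam * Qs i j)
    (P : ℕ → ℝ) (hP : P = sumDist n fun i => cbern (p i) (Qs i)) :
    ∀ s : ℕ,
      score2 lam Q P s =
        (∑ i : Fin n, ∑ x ∈ Finset.range (s + 1),
            score2 (p i) (Qs i) (cbern (p i) (Qs i)) x *
              (cbern (p i) (Qs i) x *
                looDist n (fun j => cbern (p j) (Qs j)) i (s - x))) / P s := by
  intro s
  haveI : Nonempty (Fin n) := ⟨⟨0, hn⟩⟩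
  set Pi : Fin n → ℕ → ℝ := fun i => cbern (p i) (Qs i) with hPidef
  have hPipos : ∀ i x, 0 < Pi i x := fun i => cbern_pos (hp i).1 (hp i).2 (hfull i)
  have hPinn : ∀ i x, 0 ≤ Pi i x := fun i x => (hPipos i x).le
  have hdec : ∀ i : Fin n, P = dconv (Pi i) (looDist n Pi i) := by
    intro i; rw [hP]; exact sumDist_eq_dconv_loo n Pi i
  obtain ⟨i0⟩ : Nonempty (Fin n) := inferInstance
  have hPpos : 0 < P s := by
    rw [hdec i0]
    apply Finset.sum_pos'
    · intro j _
      exact mul_nonneg (hPinn i0 j) (looDist_nonneg hPinn i0 _)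
    · refine ⟨s, Finset.self_mem_range_succ s, ?_⟩
      rw [Nat.sub_self]
      exact mul_pos (hPipos i0 s) (looDist_zero_pos hPipos i0)
  have hlampos : 0 < lam := by
    rw [hlam]; exact Finset.sum_pos (fun i _ => (hp i).1) Finset.univ_nonempty
  have hlamQ : ∀ j : ℕ, (∑ i : Fin n, p i * Qs i j) = lam * Q j := by
    intro j
    rw [hQ]
    rw [Finset.mul_sum]
    apply Finset.sum_congr rfl
    intro i _
    field_simp
  -- per-summand rewrite
  have hterm : ∀ (i : Fin n) (x : ℕ),
      score2 (p i) (Qs i) (Pi i) x * (Pi i x * looDist n Pi i (s - x))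
        = p i * (dconv (fun j => (j:ℝ) * Qs i j) (Pi i) x * looDist n Pi i (s - x))
          - ((x:ℝ) * Pi i x) * looDist n Pi i (s - x) := by
    intro i x
    have hne : Pi i x ≠ 0 := (hPipos i x).ne'
    show (p i * (∑ j ∈ Finset.range (x + 1), (j:ℝ) * Qs i j * Pi i (x - j)) / Pi i x
        - (x:ℝ)) * (Pi i x * looDist n Pi i (s - x)) = _
    have hdc : dconv (fun j => (j:ℝ) * Qs i j) (Pi i) x
        = ∑ j ∈ Finset.range (x + 1), (j:ℝ) * Qs i j * Pi i (x - j) := rfl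
    rw [hdc]
    field_simp
  have hsum_i : ∀ i : Fin n,
      ∑ x ∈ Finset.range (s + 1),
          score2 (p i) (Qs i) (Pi i) x * (Pi i x * looDist n Pi i (s - x))
        = p i * dconv (fun j => (j:ℝ) * Qs i j) P s
          - dconv (fun x => (x:ℝ) * Pi i x) (looDist n Pi i) s := by
    intro i
    rw [Finset.sum_congr rfl fun x _ => hterm i x, Finset.sum_sub_distrib]
    congr 1
    · rw [← Finset.mul_sum]
      congr 1
      have : dconv (fun j => (j:ℝ) * Qs i j) P
          = dconv (dconv (fun j => (j:ℝ) * Qs i j) (Pi i)) (looDist n Pi i) := by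
        rw [dconv_assoc, ← hdec i]
      rw [this]
      rfl
  rw [Finset.sum_congr rfl fun i _ => hsum_i i, Finset.sum_sub_distrib,
    moment_decomp n Pi s, ← hP]
  have hfirst : (∑ i : Fin n, p i * dconv (fun j => (j:ℝ) * Qs i j) P s)
      = lam * ∑ j ∈ Finset.range (s + 1), (j:ℝ) * Q j * P (s - j) := by
    calc (∑ i : Fin n, p i * dconv (fun j => (j:ℝ) * Qs i j) P s)
        = ∑ i : Fin n, ∑ j ∈ Finset.range (s + 1),
            p i * Qs i j * ((j:ℝ) * P (s - j)) := by
          apply Finset.sum_congr rfl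
          intro i _
          show p i * ∑ j ∈ Finset.range (s + 1), ((j:ℝ) * Qs i j) * P (s - j) = _
          rw [Finset.mul_sum]
          apply Finset.sum_congr rfl
          intro j _; ring
      _ = ∑ j ∈ Finset.range (s + 1),
            (∑ i : Fin n, p i * Qs i j) * ((j:ℝ) * P (s - j)) := by
          rw [Finset.sum_comm]
          apply Finset.sum_congr rfl
          intro j _; rw [Finset.sum_mul]
      _ = lam * ∑ j ∈ Finset.range (s + 1), (j:ℝ) * Q j * P (s - j) := by
          rw [Finset.mul_sum]
          apply Finset.sum_congr rfl
          intro j _; rw [hlamQ j]; ring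
  rw [hfirst]
  unfold score2
  rw [sub_div, mul_div_assoc, mul_div_assoc, div_self hPpos.ne', mul_one]
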